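/- Let K ≥ 2, let μ : {1,…,K} → ℝ satisfy μ₁ > μ₂ ≥ ⋯ ≥ μ_K, and let c : {1,…,K} → ℝ with c_a > 0 for all a. Set Δ_a = μ₁ − μ_a for a ≥ 2, and for y ∈ [0, Δ₂²/2) define x_a(y) = 2y/(Δ_a² − 2y), m_a(y) = (μ₁ + x_a(y)·μ_a)/(1 + x_a(y)), and F(y) = Σ_{a=2}^K (c_a/c₁) · (μ₁ − m_a(y))² / (μ_a − m_a(y))² for y ∈ (0, Δ₂²/2), with F(0) = 0. Then F is continuous and strictly increasing on [0, Δ₂²/2), F(y) → ∞ as y → Δ₂²/2, and consequently there is a unique y* ∈ (0, Δ₂²/2) with F(y*) = 1. (Gaussian specialization of the function F_{μ,c} in Theorem 10 used to compute the optimal cost proportions.) -/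

import Mathlib

open Filter

open Set Topology

/-- Auxiliary algebraic identity. -/
lemma aux_ratio_sq (q t d e : ℝ) (he : e ≠ 0) (hd : d ≠ 0) :
    q * (t * d / e) ^ 2 / (-d / e) ^ 2 = q * t ^ 2 := by
  field_simp

/-- Gaussian specialization of the function `F_{μ,c}` of
Theorem 10. Arm `0` plays the role of arm 1 (the best arm) and arm `1`
the role of arm 2. With `Δ_a = μ₀ − μ_a`, `x_a(y) = 2y/(Δ_a² − 2y)`,
`m_a(y) = (μ₀ + x_a(y)μ_a)/(1 + x_a(y))` and
`F(y) = Σ_{a≠0} (c_a/c₀)·(μ₀ − m_a(y))²/(μ_a − m_a(y))²`, the function `F`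
is continuous and strictly increasing on `[0, Δ₁²/2)`, tends to `∞` at the
right endpoint, and there is a unique `y* ∈ (0, Δ₁²/2)` with `F(y*) = 1`. -/
theorem F_monotone_unique_root
    (K : ℕ) [NeZero K] (hK : 2 ≤ K)
    (μ c : Fin K → ℝ)
    (hc : ∀ a, 0 < c a)
    (h12 : μ 1 < μ 0)
    (hmono : ∀ a b : Fin K, 1 ≤ a → a ≤ b → μ b ≤ μ a) :
    let Δ : Fin K → ℝ := fun a => μ 0 - μ a
    let x : Fin K → ℝ → ℝ := fun a y => 2 * y / ((Δ a) ^ 2 - 2 * y)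
    let m : Fin K → ℝ → ℝ := fun a y => (μ 0 + x a y * μ a) / (1 + x a y)
    let F : ℝ → ℝ := fun y =>
      ∑ a ∈ Finset.univ.erase 0, (c a / c 0) * (μ 0 - m a y) ^ 2 / (μ a - m a y) ^ 2
    ContinuousOn F (Set.Ico 0 ((Δ 1) ^ 2 / 2)) ∧
    StrictMonoOn F (Set.Ico 0 ((Δ 1) ^ 2 / 2)) ∧
    Tendsto F (nhdsWithin ((Δ 1) ^ 2 / 2) (Set.Ico 0 ((Δ 1) ^ 2 / 2))) atTop ∧
    ∃! y : ℝ, y ∈ Set.Ioo 0 ((Δ 1) ^ 2 / 2) ∧ F y = 1 := by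
  intro Δ x m F
  have hK1 : (1 : Fin K).val = 1 := by
    simp [Fin.val_one', Nat.mod_eq_of_lt (by omega : 1 < K)]
  have h1ne0 : (1 : Fin K) ≠ 0 := by
    intro h
    have h' : (1 : Fin K).val = (0 : Fin K).val := congrArg Fin.val h
    rw [hK1] at h'
    simp at h' 
  have hmu : ∀ a : Fin K, a ≠ 0 → μ a ≤ μ 1 := by
    intro a ha
    apply hmono 1 a le_rfl
    rw [Fin.le_def, hK1]
    have : a.val ≠ 0 := by intro h; apply ha; exact Fin.ext (by simp [h])
    omega
  have hd1 : 0 < μ 0 - μ 1 := sub_pos.2 h12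
  have hd : ∀ a : Fin K, a ≠ 0 → μ 0 - μ 1 ≤ μ 0 - μ a := by
    intro a ha
    have := hmu a ha
    linarith
  have hLpos : 0 < (μ 0 - μ 1) ^ 2 / 2 := by positivity
  have hden : ∀ a : Fin K, a ≠ 0 → ∀ y ∈ Ico (0:ℝ) ((μ 0 - μ 1) ^ 2 / 2),
      0 < (μ 0 - μ a) ^ 2 - 2 * y := by
    intro a ha y hy
    have h1 : (μ 0 - μ 1) ^ 2 ≤ (μ 0 - μ a) ^ 2 :=
      pow_le_pow_left₀ hd1.le (hd a ha) 2
    have h2 := hy.2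
    linarith
  have hxnn : ∀ a : Fin K, a ≠ 0 → ∀ y ∈ Ico (0:ℝ) ((μ 0 - μ 1) ^ 2 / 2),
      0 ≤ x a y := by
    intro a ha y hy
    exact div_nonneg (by linarith [hy.1]) (hden a ha y hy).le
  have hFeq : ∀ y ∈ Ico (0:ℝ) ((μ 0 - μ 1) ^ 2 / 2),
      F y = ∑ a ∈ Finset.univ.erase 0, (c a / c 0) * (x a y) ^ 2 := by
    intro y hy
    apply Finset.sum_congr rfl
    intro a ha
    have ha0 : a ≠ 0 := Finset.ne_of_mem_erase ha
    have hxnn' := hxnn a ha0 y hy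
    have h1x : (0:ℝ) < 1 + x a y := add_pos_of_pos_of_nonneg one_pos hxnn'
    have hΔa : 0 < μ 0 - μ a := lt_of_lt_of_le hd1 (hd a ha0)
    have hne1 : (1 + x a y) ≠ 0 := h1x.ne'
    have hne2 : μ 0 - μ a ≠ 0 := hΔa.ne'
    have hm1 : μ 0 - m a y = x a y * (μ 0 - μ a) / (1 + x a y) := by
      simp only [m]
      field_simp
      ring
    have hm2 : μ a - m a y = -(μ 0 - μ a) / (1 + x a y) := by
      simp only [m]
      field_simp
      ring
    rw [hm1, hm2]
    exact aux_ratio_sq _ _ _ _ hne1 hne2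
  have hxlt : ∀ a : Fin K, a ≠ 0 → ∀ y1 ∈ Ico (0:ℝ) ((μ 0 - μ 1) ^ 2 / 2),
      ∀ y2 ∈ Ico (0:ℝ) ((μ 0 - μ 1) ^ 2 / 2), y1 < y2 → x a y1 < x a y2 := by
    intro a ha y1 hy1 y2 hy2 hlt
    have d1 := hden a ha y1 hy1
    have d2 := hden a ha y2 hy2
    have hy1nn := hy1.1
    show 2 * y1 / ((μ 0 - μ a) ^ 2 - 2 * y1) < 2 * y2 / ((μ 0 - μ a) ^ 2 - 2 * y2)
    rw [div_lt_div_iff₀ d1 d2]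
    nlinarith
  have hcont : ContinuousOn F (Ico 0 ((μ 0 - μ 1) ^ 2 / 2)) := by
    have hsum : ContinuousOn
        (fun y => ∑ a ∈ Finset.univ.erase (0 : Fin K), (c a / c 0) * (x a y) ^ 2)
        (Ico 0 ((μ 0 - μ 1) ^ 2 / 2)) := by
      apply continuousOn_finset_sum
      intro a ha
      have ha0 := Finset.ne_of_mem_erase ha
      apply ContinuousOn.mul continuousOn_const
      apply ContinuousOn.pow
      show ContinuousOn (fun y => 2 * y / ((μ 0 - μ a) ^ 2 - 2 * y)) _
      exact ContinuousOn.div (by fun_prop) (by fun_prop)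
        (fun y hy => (hden a ha0 y hy).ne')
    exact hsum.congr hFeq
  have hsm : StrictMonoOn F (Ico 0 ((μ 0 - μ 1) ^ 2 / 2)) := by
    intro y1 hy1 y2 hy2 hlt
    rw [hFeq y1 hy1, hFeq y2 hy2]
    apply Finset.sum_lt_sum_of_nonempty
    · exact ⟨1, Finset.mem_erase.2 ⟨h1ne0, Finset.mem_univ 1⟩⟩
    · intro a ha
      have ha0 := Finset.ne_of_mem_erase ha
      have hx12 := hxlt a ha0 y1 hy1 y2 hy2 hlt
      have hnn := hxnn a ha0 y1 hy1
      have hcpos : 0 < c a / c 0 := div_pos (hc a) (hc 0)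
      have hsq : (x a y1) ^ 2 < (x a y2) ^ 2 := pow_lt_pow_left₀ hx12 hnn (by omega : (2:ℕ) ≠ 0)
      exact mul_lt_mul_of_pos_left hsq hcpos
  have h1mem' : (1 : Fin K) ∈ Finset.univ.erase (0 : Fin K) :=
    Finset.mem_erase.2 ⟨h1ne0, Finset.mem_univ 1⟩
  have hx1top : Tendsto (fun y => x 1 y)
      (𝓝[Ico 0 ((μ 0 - μ 1) ^ 2 / 2)] ((μ 0 - μ 1) ^ 2 / 2)) atTop := by
    have hd2 : Tendsto (fun y : ℝ => (μ 0 - μ 1) ^ 2 - 2 * y)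
        (𝓝[Ico 0 ((μ 0 - μ 1) ^ 2 / 2)] ((μ 0 - μ 1) ^ 2 / 2)) (𝓝[>] 0) := by
      apply tendsto_nhdsWithin_of_tendsto_nhds_of_eventually_within
      · have h' : Tendsto (fun y : ℝ => (μ 0 - μ 1) ^ 2 - 2 * y)
            (𝓝 ((μ 0 - μ 1) ^ 2 / 2)) (𝓝 ((μ 0 - μ 1) ^ 2 - 2 * ((μ 0 - μ 1) ^ 2 / 2))) :=
          (continuous_const.sub (continuous_const.mul continuous_id)).tendsto _
        rw [show (μ 0 - μ 1) ^ 2 - 2 * ((μ 0 - μ 1) ^ 2 / 2) = 0 by ring] at h'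
        exact h'.mono_left nhdsWithin_le_nhds
      · filter_upwards [self_mem_nhdsWithin] with y hy
        exact mem_Ioi.2 (hden 1 h1ne0 y hy)
    have hinv : Tendsto (fun y : ℝ => ((μ 0 - μ 1) ^ 2 - 2 * y)⁻¹)
        (𝓝[Ico 0 ((μ 0 - μ 1) ^ 2 / 2)] ((μ 0 - μ 1) ^ 2 / 2)) atTop :=
      tendsto_inv_nhdsGT_zero.comp hd2
    have hnum : Tendsto (fun y : ℝ => 2 * y)
        (𝓝[Ico 0 ((μ 0 - μ 1) ^ 2 / 2)] ((μ 0 - μ 1) ^ 2 / 2)) (𝓝 ((μ 0 - μ 1) ^ 2)) := by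
      have h' : Tendsto (fun y : ℝ => 2 * y)
          (𝓝 ((μ 0 - μ 1) ^ 2 / 2)) (𝓝 (2 * ((μ 0 - μ 1) ^ 2 / 2))) :=
        (continuous_const.mul continuous_id).tendsto _
      rw [show 2 * ((μ 0 - μ 1) ^ 2 / 2) = (μ 0 - μ 1) ^ 2 by ring] at h'
      exact h'.mono_left nhdsWithin_le_nhds
    have hmul := Filter.Tendsto.pos_mul_atTop
      (by positivity : (0:ℝ) < (μ 0 - μ 1) ^ 2) hnum hinv
    show Tendsto (fun y => 2 * y / ((μ 0 - μ 1) ^ 2 - 2 * y)) _ atTop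
    simpa [div_eq_mul_inv] using hmul
  have htop : Tendsto F
      (𝓝[Ico 0 ((μ 0 - μ 1) ^ 2 / 2)] ((μ 0 - μ 1) ^ 2 / 2)) atTop := by
    apply tendsto_atTop_mono' _ _
      (Filter.Tendsto.const_mul_atTop (div_pos (hc 1) (hc 0))
        (Filter.Tendsto.atTop_mul_atTop₀ hx1top hx1top))
    filter_upwards [self_mem_nhdsWithin] with y hy
    rw [hFeq y hy]
    have hle : (c 1 / c 0) * (x 1 y) ^ 2 ≤
        ∑ a ∈ Finset.univ.erase (0 : Fin K), (c a / c 0) * (x a y) ^ 2 :=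
      Finset.single_le_sum (f := fun a => (c a / c 0) * (x a y) ^ 2)
        (fun a _ => mul_nonneg (div_pos (hc a) (hc 0)).le (sq_nonneg _)) h1mem'
    calc c 1 / c 0 * (x 1 y * x 1 y) = (c 1 / c 0) * (x 1 y) ^ 2 := by ring
      _ ≤ _ := hle
  haveI : (𝓝[Ico (0:ℝ) ((μ 0 - μ 1) ^ 2 / 2)] ((μ 0 - μ 1) ^ 2 / 2)).NeBot := by
    apply mem_closure_iff_nhdsWithin_neBot.1
    rw [closure_Ico hLpos.ne]
    exact ⟨hLpos.le, le_rfl⟩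
  have hF0 : F 0 = 0 := by
    rw [hFeq 0 ⟨le_rfl, hLpos⟩]
    apply Finset.sum_eq_zero
    intro a ha
    simp [x]
  obtain ⟨y0, hy0F, hy0mem⟩ :=
    ((htop.eventually (eventually_gt_atTop 1)).and self_mem_nhdsWithin).exists
  have hy0L : y0 < (μ 0 - μ 1) ^ 2 / 2 := hy0mem.2
  have hy0nn : (0:ℝ) ≤ y0 := hy0mem.1
  have hIcc : Icc (0:ℝ) y0 ⊆ Ico 0 ((μ 0 - μ 1) ^ 2 / 2) :=
    fun z hz => ⟨hz.1, lt_of_le_of_lt hz.2 hy0L⟩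
  have h1mem : (1:ℝ) ∈ Ioo (F 0) (F y0) := by
    rw [hF0]; exact ⟨one_pos, hy0F⟩
  obtain ⟨y, hyIoo, hyF⟩ := intermediate_value_Ioo hy0nn (hcont.mono hIcc) h1mem
  have hyIco : y ∈ Ico (0:ℝ) ((μ 0 - μ 1) ^ 2 / 2) :=
    ⟨hyIoo.1.le, lt_trans hyIoo.2 hy0L⟩
  refine ⟨hcont, hsm, htop, y, ⟨⟨hyIoo.1, lt_trans hyIoo.2 hy0L⟩, hyF⟩, ?_⟩
  rintro z ⟨hzmem, hzF⟩
  exact hsm.injOn ⟨hzmem.1.le, hzmem.2⟩ hyIco (by rw [hzF, hyF])
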